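/- Let κ > 1, C > 1, U > 0 and let R > 0 satisfy R^{(κ-1)/κ} ≥ 4(C−1)Ut for a given t > 0. Then for all s with 0 ≤ s ≤ t: (R − 4(C−1)·Ut·R^{1/κ}) + (C−1)·Us·(R − 4(C−1)·Ut·R^{1/κ})^{1/κ} ≤ R − 4(C−1)·U(t−s)·R^{1/κ}. -/

import Mathlib

/-- Upper barrier inequality (3.7) (eq:Imin): the upper endpoint of a safe
interval is not crossed outward by a trajectory of radial speed at most
`(C-1)U·(radius)^{1/κ}`. -/
theorem upper_barrier_inequality (κ C U R t : ℝ) (hκ : 1 < κ) (hC : 1 < C)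
    (hU : 0 < U) (hR : 0 < R) (ht : 0 < t)
    (hRt : 4 * (C - 1) * U * t ≤ R ^ ((κ - 1) / κ)) :
    ∀ s : ℝ, 0 ≤ s → s ≤ t →
      (R - 4 * (C - 1) * U * t * R ^ (1 / κ)) +
          (C - 1) * U * s * (R - 4 * (C - 1) * U * t * R ^ (1 / κ)) ^ (1 / κ)
        ≤ R - 4 * (C - 1) * U * (t - s) * R ^ (1 / κ) := by
  intro s hs hst
  have hκ0 : (0:ℝ) < κ := by linarith
  have hRp : (0:ℝ) ≤ R ^ (1 / κ) := Real.rpow_nonneg hR.le _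
  have hA : 4 * (C - 1) * U * t * R ^ (1 / κ) ≤ R := by
    calc 4 * (C - 1) * U * t * R ^ (1 / κ)
        ≤ R ^ ((κ - 1) / κ) * R ^ (1 / κ) := mul_le_mul_of_nonneg_right hRt hRp
      _ = R := by
          rw [← Real.rpow_add hR]
          have h1 : (κ - 1) / κ + 1 / κ = 1 := by field_simp; ring
          rw [h1, Real.rpow_one]
  have hbase : 0 ≤ R - 4 * (C - 1) * U * t * R ^ (1 / κ) := by linarith
  have hAnn : 0 ≤ 4 * (C - 1) * U * t * R ^ (1 / κ) :=
    mul_nonneg (mul_nonneg (mul_nonneg (mul_nonneg (by norm_num : (0:ℝ) ≤ 4)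
      (by linarith : (0:ℝ) ≤ C - 1)) hU.le) ht.le) hRp
  have hmono : (R - 4 * (C - 1) * U * t * R ^ (1 / κ)) ^ (1 / κ) ≤ R ^ (1 / κ) :=
    Real.rpow_le_rpow hbase (by linarith) (div_pos one_pos hκ0).le
  have hcs : 0 ≤ (C - 1) * U * s := mul_nonneg (mul_nonneg (by linarith) hU.le) hs
  have h1 : (C - 1) * U * s * (R - 4 * (C - 1) * U * t * R ^ (1 / κ)) ^ (1 / κ)
      ≤ (C - 1) * U * s * R ^ (1 / κ) := mul_le_mul_of_nonneg_left hmono hcs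
  nlinarith [mul_nonneg hcs hRp]
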